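/- Let u ∈ K satisfy ⟨Du − l, v − u⟩_H ≥ 0 for all v ∈ K, and let u_N ∈ K_N satisfy ⟨D_M u_N − l_M, v_N − u_N⟩_H ≥ 0 for all v_N ∈ K_N. Then for all v ∈ K and all v_N ∈ K_N, ‖u − u_N‖_H² ≤ 18‖u − v_N‖_H² + 4⟨Du − l, (v_N − u) + (v − u_N)⟩_H + 4‖(D − D_M)v_N − (l − l_M)‖_H². -/
import Mathlib


open scoped RealInnerProductSpace

set_option maxHeartbeats 1000000 in
/-- Strang–Falk type a priori estimate for the reduced variational
inequalities: `‖u − u_N‖² ≤ 18‖u − v_N‖² + 4⟨Du − l, (v_N − u) + (v − u_N)⟩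
+ 4‖(D − D_M)v_N − (l − l_M)‖²` for all `v ∈ K`, `v_N ∈ K_N`. -/
theorem stmt_11 {H Q : Type*}
    [NormedAddCommGroup H] [InnerProductSpace ℝ H] [CompleteSpace H]
    [NormedAddCommGroup Q] [InnerProductSpace ℝ Q] [CompleteSpace Q]
    (B : H →L[ℝ] Q) (hB : ‖B‖ ≤ 1)
    (f_e : H) (f_f : Q)
    (K : Set H) (hK_ne : K.Nonempty) (hK_cl : IsClosed K) (hK_cv : Convex ℝ K)
    (V_N : Submodule ℝ H) (hVN : FiniteDimensional ℝ V_N)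
    (K_N : Set H) (hKN_sub : K_N ⊆ (V_N : Set H))
    (hKN_ne : K_N.Nonempty) (hKN_cl : IsClosed K_N) (hKN_cv : Convex ℝ K_N)
    (W : Submodule ℝ Q) (hW : FiniteDimensional ℝ W)
    (P : Q →L[ℝ] Q) (hP : ∀ x : Q, P x ∈ W ∧ x - P x ∈ Wᗮ)
    (D D_M : H →L[ℝ] H) (l l_M : H)
    (hD : D = ContinuousLinearMap.id ℝ H + (ContinuousLinearMap.adjoint B).comp B)
    (hDM : D_M = ContinuousLinearMap.id ℝ H + (ContinuousLinearMap.adjoint B).comp (P.comp B))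
    (hl : l = f_e - ContinuousLinearMap.adjoint B f_f)
    (hlM : l_M = f_e - ContinuousLinearMap.adjoint B (P f_f))
    (u : H) (hu : u ∈ K) (hVI : ∀ v ∈ K, ⟪D u - l, v - u⟫ ≥ 0)
    (u_N : H) (huN : u_N ∈ K_N) (hVIN : ∀ v_N ∈ K_N, ⟪D_M u_N - l_M, v_N - u_N⟫ ≥ 0) :
    ∀ v ∈ K, ∀ v_N ∈ K_N,
      ‖u - u_N‖ ^ 2 ≤ 18 * ‖u - v_N‖ ^ 2 +
        4 * ⟪D u - l, (v_N - u) + (v - u_N)⟫ +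
        4 * ‖(D - D_M) v_N - (l - l_M)‖ ^ 2 := by
  intro v hv v_N hvN
  -- P is an orthogonal projection onto W
  have hP_inner : ∀ x y : Q, ⟪P x, y⟫ = ⟪P x, P y⟫ := by
    intro x y
    have h2 : (⟪P x, y - P y⟫ : ℝ) = 0 := (hP y).2 (P x) (hP x).1
    have := inner_sub_right (𝕜 := ℝ) (P x) y (P y)
    linarith [this ▸ h2]
  have hP_inner' : ∀ x y : Q, ⟪x - P x, y - P y⟫ = ⟪x - P x, y⟫ := by
    intro x y
    have h2 : (⟪P y, x - P x⟫ : ℝ) = 0 := (hP x).2 (P y) (hP y).1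
    have h3 : (⟪x - P x, P y⟫ : ℝ) = 0 := by rw [real_inner_comm]; exact h2
    have := inner_sub_right (𝕜 := ℝ) (x - P x) y (P y)
    linarith
  -- Pythagoras
  have hPyth : ∀ x : Q, ‖P x‖ ^ 2 + ‖x - P x‖ ^ 2 = ‖x‖ ^ 2 := by
    intro x
    have h0 : (⟪P x, x - P x⟫ : ℝ) = 0 := (hP x).2 (P x) (hP x).1
    have := norm_add_sq_real (P x) (x - P x)
    have hx : P x + (x - P x) = x := by abel
    rw [hx, h0] at this
    linarith
  have hBle : ∀ x : H, ‖B x‖ ≤ ‖x‖ := by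
    intro x
    calc ‖B x‖ ≤ ‖B‖ * ‖x‖ := B.le_opNorm x
    _ ≤ 1 * ‖x‖ := mul_le_mul_of_nonneg_right hB (norm_nonneg x)
    _ = ‖x‖ := one_mul _
  -- inner product with D_M
  have hDMd : ∀ x y : H, ⟪D_M x, y⟫ = ⟪x, y⟫ + ⟪P (B x), P (B y)⟫ := by
    intro x y
    rw [hDM]
    simp only [ContinuousLinearMap.add_apply, ContinuousLinearMap.coe_comp',
      Function.comp_apply, ContinuousLinearMap.coe_id', id_eq, inner_add_left,
      ContinuousLinearMap.adjoint_inner_left]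
    rw [hP_inner]
  -- inner product with D - D_M
  have hDdiff : ∀ x y : H, ⟪(D - D_M) x, y⟫ = ⟪B x - P (B x), B y - P (B y)⟫ := by
    intro x y
    rw [hD, hDM]
    have : ((ContinuousLinearMap.id ℝ H + (ContinuousLinearMap.adjoint B).comp B)
        - (ContinuousLinearMap.id ℝ H + (ContinuousLinearMap.adjoint B).comp (P.comp B))) x
        = ContinuousLinearMap.adjoint B (B x - P (B x)) := by
      simp only [ContinuousLinearMap.sub_apply, ContinuousLinearMap.add_apply,
        ContinuousLinearMap.coe_comp', Function.comp_apply, ContinuousLinearMap.coe_id', id_eq,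
        map_sub]
      abel
    rw [this, ContinuousLinearMap.adjoint_inner_left, ← hP_inner']
  -- abbreviations
  set a := ‖u - u_N‖ with ha
  set b := ‖u - v_N‖ with hb
  set d := ‖(D - D_M) v_N - (l - l_M)‖ with hd
  set p := ‖P (B (u - u_N))‖ with hp
  set s := ‖B (u - u_N) - P (B (u - u_N))‖ with hs
  set q := ‖P (B (u - v_N))‖ with hq
  set c := ‖B (u - v_N) - P (B (u - v_N))‖ with hc
  set T := (⟪D u - l, (v_N - u) + (v - u_N)⟫ : ℝ) with hT
  -- Pythagoras consequences
  have F1 : p ^ 2 + s ^ 2 ≤ a ^ 2 := by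
    have h1 := hPyth (B (u - u_N))
    have h2 := hBle (u - u_N)
    nlinarith [norm_nonneg (B (u - u_N)), norm_nonneg (u - u_N)]
  have F2 : q ^ 2 + c ^ 2 ≤ b ^ 2 := by
    have h1 := hPyth (B (u - v_N))
    have h2 := hBle (u - v_N)
    nlinarith [norm_nonneg (B (u - v_N)), norm_nonneg (u - v_N)]
  -- coercivity: ⟪D_M e, e⟫ = a² + p²
  have G1 : (⟪D_M (u - u_N), u - u_N⟫ : ℝ) = a ^ 2 + p ^ 2 := by
    rw [hDMd, real_inner_self_eq_norm_sq, real_inner_self_eq_norm_sq]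
  -- the key algebraic identity
  have G2 : (⟪D_M (u - u_N), u - u_N⟫ : ℝ)
      = ⟪D u - l, u - v⟫ + T
        + ⟪D_M u_N - l_M, u_N - v_N⟫
        + ⟪(D u - D_M u) - (l - l_M), u_N - v_N⟫
        + ⟪D_M (u - u_N), u - v_N⟫ := by
    rw [hT]
    simp only [map_sub, inner_sub_left, inner_sub_right, inner_add_right]
    ring
  have G3 : (⟪D u - l, u - v⟫ : ℝ) ≤ 0 := by
    have h1 := hVI v hv
    have h2 : (⟪D u - l, u - v⟫ : ℝ) = -⟪D u - l, v - u⟫ := by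
      rw [show u - v = -(v - u) by abel, inner_neg_right]
    linarith
  have G4 : (⟪D_M u_N - l_M, u_N - v_N⟫ : ℝ) ≤ 0 := by
    have h1 := hVIN v_N hvN
    have h2 : (⟪D_M u_N - l_M, u_N - v_N⟫ : ℝ) = -⟪D_M u_N - l_M, v_N - u_N⟫ := by
      rw [show u_N - v_N = -(v_N - u_N) by abel, inner_neg_right]
    linarith
  -- consistency-term estimate
  have hNtri : ‖u_N - v_N‖ ≤ a + b := by
    calc ‖u_N - v_N‖ = ‖(u - v_N) - (u - u_N)‖ := by rw [show (u - v_N) - (u - u_N) = u_N - v_N by abel]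
    _ ≤ ‖u - v_N‖ + ‖u - u_N‖ := norm_sub_le _ _
    _ = a + b := by ring
  have G5 : (⟪(D u - D_M u) - (l - l_M), u_N - v_N⟫ : ℝ) ≤ d * (a + b) + s * c + c ^ 2 := by
    have hsplit : (D u - D_M u) - (l - l_M)
        = ((D - D_M) v_N - (l - l_M)) + (D - D_M) (u - v_N) := by
      simp only [ContinuousLinearMap.sub_apply, map_sub]
      abel
    rw [hsplit, inner_add_left]
    have e1 : (⟪(D - D_M) v_N - (l - l_M), u_N - v_N⟫ : ℝ) ≤ d * (a + b) := by
      calc (⟪(D - D_M) v_N - (l - l_M), u_N - v_N⟫ : ℝ)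
          ≤ d * ‖u_N - v_N‖ := real_inner_le_norm _ _
      _ ≤ d * (a + b) := mul_le_mul_of_nonneg_left hNtri (norm_nonneg _)
    have e2 : (⟪(D - D_M) (u - v_N), u_N - v_N⟫ : ℝ) ≤ s * c + c ^ 2 := by
      rw [hDdiff]
      have hz : B (u_N - v_N) - P (B (u_N - v_N))
          = (B (u - v_N) - P (B (u - v_N))) - (B (u - u_N) - P (B (u - u_N))) := by
        rw [show u_N - v_N = (u - v_N) - (u - u_N) by abel]
        simp only [map_sub]
        abel
      calc (⟪B (u - v_N) - P (B (u - v_N)), B (u_N - v_N) - P (B (u_N - v_N))⟫ : ℝ)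
          ≤ c * ‖B (u_N - v_N) - P (B (u_N - v_N))‖ := real_inner_le_norm _ _
      _ ≤ c * (c + s) := by
          apply mul_le_mul_of_nonneg_left _ (norm_nonneg _)
          rw [hz]
          exact norm_sub_le _ _
      _ = s * c + c ^ 2 := by ring
    linarith
  have G6 : (⟪D_M (u - u_N), u - v_N⟫ : ℝ) ≤ a * b + p * q := by
    rw [hDMd]
    have e1 : (⟪u - u_N, u - v_N⟫ : ℝ) ≤ a * b := real_inner_le_norm _ _
    have e2 : (⟪P (B (u - u_N)), P (B (u - v_N))⟫ : ℝ) ≤ p * q := real_inner_le_norm _ _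
    linarith
  -- the main energy inequality
  have main : a ^ 2 + p ^ 2 ≤ T + a * b + p * q + s * c + c ^ 2 + d * (a + b) := by
    linarith [G1, G2, G3, G4, G5, G6]
  -- final arithmetic
  have E : 0 ≤ 3 * a ^ 2 + 4 * p ^ 2 + 18 * b ^ 2 + 4 * d ^ 2 - 4 * a * b - 4 * p * q
      - 4 * s * c - 4 * c ^ 2 - 4 * d * a - 4 * d * b := by
    nlinarith [F1, F2, sq_nonneg (a - 3 * b), sq_nonneg (2 * d - (a + b)),
      sq_nonneg (p - 2 * q), sq_nonneg (s - 2 * c), sq_nonneg p, sq_nonneg q]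
  nlinarith [main, E]
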